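/- arXiv:1509.08145 — 2 statements merged into one kernel-verified Lean document; each statement's English description precedes it below -/
import Mathlib

section
/- Let φ* be an optimal linear arrangement of a tree T on n ≥ 2 vertices and let P = (w₁,…,w_l) be its spinal path. Then φ* is strictly increasing along P, i.e. φ*(w_i) < φ*(w_{i+1}) for all 1 ≤ i < l. -/
open Finset SimpleGraph
open scoped Classical

variable {V : Type*}

/-- The linear arrangement cost of a layout `φ` of a graph `G`. -/
noncomputable def layoutCost [Fintype V] (G : SimpleGraph V)
    (φ : V ≃ Fin (Fintype.card V)) : ℕ :=
  ∑ e ∈ G.edgeFinset,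
    Sym2.lift ⟨fun u v => (((φ u : ℕ) : ℤ) - ((φ v : ℕ) : ℤ)).natAbs,
      fun u v => by simp only []; omega⟩ e

/-- `φ` is an optimal linear arrangement of `G`. -/
def IsOLA [Fintype V] (G : SimpleGraph V) (φ : V ≃ Fin (Fintype.card V)) : Prop :=
  ∀ ψ : V ≃ Fin (Fintype.card V), layoutCost G φ ≤ layoutCost G ψ

/-- The optimal linear arrangement cost of `G`. -/
noncomputable def olaCost [Fintype V] (G : SimpleGraph V) : ℕ :=
  sInf (Set.range (layoutCost G))

/-- Deleting a vertex: keep the vertex type, remove all incident edges. -/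
def deleteVertex (G : SimpleGraph V) (w : V) : SimpleGraph V where
  Adj x y := G.Adj x y ∧ x ≠ w ∧ y ≠ w
  symm := ⟨fun x y h => ⟨h.1.symm, h.2.2, h.2.1⟩⟩
  loopless := ⟨fun x h => G.loopless.irrefl x h.1⟩

/-- A Halin graph decomposition `H = T ⊎ C`. -/
structure IsHalin [Fintype V] (T C : SimpleGraph V) : Prop where
  tree : T.IsTree
  nonleaf_deg : ∀ v : V, T.degree v ≠ 1 → 3 ≤ T.degree v
  edge_disjoint : Disjoint T.edgeSet C.edgeSet
  cycle_support : ∀ v : V, v ∈ C.support ↔ T.degree v = 1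
  cycle_degree : ∀ v ∈ C.support, C.degree v = 2
  cycle_connected : ∀ u v : V, u ∈ C.support → v ∈ C.support → C.Reachable u v
  three_paths : ∀ u v : V, u ≠ v → ∃ p q r : (T ⊔ C).Walk u v,
    p.IsPath ∧ q.IsPath ∧ r.IsPath ∧
    (∀ e ∈ p.edges, e ∉ q.edges) ∧ (∀ e ∈ p.edges, e ∉ r.edges) ∧
    (∀ e ∈ q.edges, e ∉ r.edges) ∧
    (∀ e ∈ p.edges, e ∈ T.edgeSet) ∧
    ¬ (∀ e ∈ q.edges, e ∈ T.edgeSet) ∧ ¬ (∀ e ∈ r.edges, e ∈ T.edgeSet)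

/-- The subtree hanging at `c` after removing vertex `v`. -/
def subtreeAt (T : SimpleGraph V) (v c : V) : Set V :=
  {x | (deleteVertex T v).Reachable x c}

/-- A rooted tree is recursively balanced. -/
def IsRecBalanced (T : SimpleGraph V) (r : V) : Prop :=
  ∀ v c c' : V, T.Adj v c → T.Adj v c' →
    T.dist r c = T.dist r v + 1 → T.dist r c' = T.dist r v + 1 →
    Nat.card (subtreeAt T v c) = Nat.card (subtreeAt T v c')

/-- `r` is a central vertex of `T`. -/
def IsCentral [Fintype V] (T : SimpleGraph V) (r : V) : Prop :=
  ∀ u : V, u ≠ r → Nat.card (subtreeAt T r u) ≤ Fintype.card V / 2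




section
variable [Fintype V]

def Crosses (χ : V ≃ Fin (Fintype.card V)) (k : ℕ) (f : Sym2 V) : Prop :=
  ∃ p q, f = s(p, q) ∧ (χ p : ℕ) ≤ k ∧ k < (χ q : ℕ)

lemma crosses_mk {χ : V ≃ Fin (Fintype.card V)} {k : ℕ} {x y : V} :
    Crosses χ k s(x, y) ↔ (((χ x : ℕ) ≤ k ∧ k < (χ y : ℕ)) ∨ ((χ y : ℕ) ≤ k ∧ k < (χ x : ℕ))) := by
  constructor
  · rintro ⟨p, q, hpq, h1, h2⟩
    rw [Sym2.eq_iff] at hpq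
    rcases hpq with ⟨rfl, rfl⟩ | ⟨rfl, rfl⟩
    · exact Or.inl ⟨h1, h2⟩
    · exact Or.inr ⟨h1, h2⟩
  · rintro (⟨h1, h2⟩ | ⟨h1, h2⟩)
    · exact ⟨x, y, rfl, h1, h2⟩
    · exact ⟨y, x, Sym2.eq_swap.symm, h1, h2⟩

noncomputable def cut (G : SimpleGraph V) (χ : V ≃ Fin (Fintype.card V)) (k : ℕ) : ℕ :=
  (G.edgeFinset.filter (Crosses χ k)).card

lemma layoutCost_eq_sum_cut (G : SimpleGraph V) (χ : V ≃ Fin (Fintype.card V)) :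
    layoutCost G χ = ∑ k ∈ range (Fintype.card V), cut G χ k := by
  unfold layoutCost cut
  have h1 : ∀ e ∈ G.edgeFinset,
      Sym2.lift ⟨fun u v => (((χ u : ℕ) : ℤ) - ((χ v : ℕ) : ℤ)).natAbs,
        fun u v => by simp only []; omega⟩ e
      = ∑ k ∈ range (Fintype.card V), (if Crosses χ k e then 1 else 0) := by
    intro e he
    induction e using Sym2.ind with
    | _ x y =>
      rw [Sym2.lift_mk]
      show (((χ x : ℕ) : ℤ) - ((χ y : ℕ) : ℤ)).natAbs = _
      have hfil : (range (Fintype.card V)).filter (fun k => Crosses χ k s(x, y))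
          = Finset.Ico (min (χ x : ℕ) (χ y : ℕ)) (max (χ x : ℕ) (χ y : ℕ)) := by
        ext k
        have h1 := (χ x).isLt
        have h2 := (χ y).isLt
        simp only [mem_filter, mem_range, crosses_mk, Finset.mem_Ico]
        omega
      rw [← Finset.sum_filter, Finset.sum_const, smul_eq_mul, mul_one, hfil, Nat.card_Ico]
      omega
  rw [Finset.sum_congr rfl h1, Finset.sum_comm]
  refine Finset.sum_congr rfl fun k _ => ?_
  rw [Finset.card_filter]

noncomputable def sep {n : ℕ} (S : Finset (Fin n)) : Fin n ≃ Fin n :=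
  ((((Equiv.sumCompl (· ∈ S)).symm.trans
      (Equiv.sumCongr (S.orderIsoOfFin rfl).symm.toEquiv
        ((Equiv.subtypeEquivRight (fun x => (Finset.mem_compl (s := S)).symm)).trans
          (Sᶜ.orderIsoOfFin rfl).symm.toEquiv))).trans
    finSumFinEquiv).trans (finCongr (by
      have := Finset.card_le_univ S
      simp only [Finset.card_compl, Fintype.card_fin] at *
      omega)))

lemma sep_apply_mem {n : ℕ} {S : Finset (Fin n)} {x : Fin n} (hx : x ∈ S) :
    (sep S x : ℕ) = ((S.orderIsoOfFin rfl).symm ⟨x, hx⟩ : Fin S.card) := by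
  simp [sep, Equiv.sumCompl_symm_apply_of_pos hx]

lemma sep_apply_not_mem {n : ℕ} {S : Finset (Fin n)} {x : Fin n} (hx : x ∉ S) :
    (sep S x : ℕ) = S.card +
      ((Sᶜ.orderIsoOfFin rfl).symm ⟨x, Finset.mem_compl.mpr hx⟩ : Fin Sᶜ.card) := by
  simp [sep, Equiv.sumCompl_symm_apply_of_neg hx, Equiv.subtypeEquivRight]
  rfl

end

section
variable {n : ℕ} {S : Finset (Fin n)} {x y : Fin n}

lemma sep_lt_card_of_mem (hx : x ∈ S) : (sep S x : ℕ) < S.card := by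
  rw [sep_apply_mem hx]; exact Fin.isLt _

lemma card_le_sep_of_not_mem (hx : x ∉ S) : S.card ≤ (sep S x : ℕ) := by
  rw [sep_apply_not_mem hx]; exact Nat.le_add_right _ _

lemma mem_of_sep_lt_card (h : (sep S x : ℕ) < S.card) : x ∈ S := by
  by_contra hx
  exact absurd h (not_lt.mpr (card_le_sep_of_not_mem hx))

lemma sep_le_sep_iff_of_mem (hx : x ∈ S) (hy : y ∈ S) :
    (sep S x : ℕ) ≤ (sep S y : ℕ) ↔ (x : ℕ) ≤ (y : ℕ) := by
  rw [sep_apply_mem hx, sep_apply_mem hy]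
  rw [← Fin.le_def, OrderIso.le_iff_le, Subtype.mk_le_mk, Fin.le_def]

lemma sep_le_sep_iff_of_not_mem (hx : x ∉ S) (hy : y ∉ S) :
    (sep S x : ℕ) ≤ (sep S y : ℕ) ↔ (x : ℕ) ≤ (y : ℕ) := by
  rw [sep_apply_not_mem hx, sep_apply_not_mem hy, Nat.add_le_add_iff_left]
  rw [← Fin.le_def, OrderIso.le_iff_le, Subtype.mk_le_mk, Fin.le_def]

lemma sep_lt_sep_iff_of_mem (hx : x ∈ S) (hy : y ∈ S) :
    (sep S x : ℕ) < (sep S y : ℕ) ↔ (x : ℕ) < (y : ℕ) := by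
  have h1 := sep_le_sep_iff_of_mem hx hy
  have h2 := sep_le_sep_iff_of_mem hy hx
  omega

lemma sep_lt_sep_iff_of_not_mem (hx : x ∉ S) (hy : y ∉ S) :
    (sep S x : ℕ) < (sep S y : ℕ) ↔ (x : ℕ) < (y : ℕ) := by
  have h1 := sep_le_sep_iff_of_not_mem hx hy
  have h2 := sep_le_sep_iff_of_not_mem hy hx
  omega

end

lemma exists_cross_edge {G : SimpleGraph V} (f : V → ℕ) (k : ℕ) :
    ∀ {x y : V} (_ : G.Walk x y), f x ≤ k → k < f y →
      ∃ p q, G.Adj p q ∧ G.Reachable x p ∧ f p ≤ k ∧ k < f q := by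
  intro x y w
  induction w with
  | nil => intro h1 h2; omega
  | @cons x m y hadj w ih =>
    intro h1 h2
    by_cases hm : f m ≤ k
    · obtain ⟨p, q, hpq, hr, hp, hq⟩ := ih hm h2
      exact ⟨p, q, hpq, (Adj.reachable hadj).trans hr, hp, hq⟩
    · exact ⟨x, m, hadj, Reachable.refl x, h1, by omega⟩

lemma path_split {G : SimpleGraph V} :
    ∀ {v u : V} (w : G.Walk v u), w.IsPath → ∀ i : ℕ, i + 1 ≤ w.length →
      (G.deleteEdges {s(w.getVert i, w.getVert (i + 1))}).Reachable v (w.getVert i) ∧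
      (G.deleteEdges {s(w.getVert i, w.getVert (i + 1))}).Reachable (w.getVert (i + 1)) u := by
  intro v u w
  induction w with
  | nil => intro _ i hi; simp at hi
  | @cons v m u hadj w ih =>
    intro hp i hi
    rcases i with _ | i
    · refine ⟨by rw [SimpleGraph.Walk.getVert_zero], ?_⟩
      have hm : (Walk.cons hadj w).getVert (0 + 1) = m := by
        simp [SimpleGraph.Walk.getVert_cons_succ]
      rw [hm, SimpleGraph.Walk.getVert_zero]
      have hvn : v ∉ w.support := (SimpleGraph.Walk.cons_isPath_iff hadj w).mp hp |>.2
      have hne : ∀ e ∈ w.edges, e ∉ ({s(v, m)} : Set (Sym2 V)) := by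
        intro e he hmem
        rw [Set.mem_singleton_iff] at hmem
        subst hmem
        exact hvn (w.fst_mem_support_of_mem_edges he)
      exact ⟨w.toDeleteEdges _ hne⟩
    · have hlen : i + 1 ≤ w.length := by
        simp only [SimpleGraph.Walk.length_cons] at hi; omega
      have hp' : w.IsPath := ((SimpleGraph.Walk.cons_isPath_iff hadj w).mp hp).1
      have hvn : v ∉ w.support := ((SimpleGraph.Walk.cons_isPath_iff hadj w).mp hp).2
      have e1 : (Walk.cons hadj w).getVert (i + 1) = w.getVert i :=
        SimpleGraph.Walk.getVert_cons_succ w hadj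
      have e2 : (Walk.cons hadj w).getVert (i + 1 + 1) = w.getVert (i + 1) :=
        SimpleGraph.Walk.getVert_cons_succ w hadj
      rw [e1, e2]
      obtain ⟨h1, h2⟩ := ih hp' i hlen
      refine ⟨?_, h2⟩
      have hne : s(v, m) ≠ s(w.getVert i, w.getVert (i + 1)) := by
        intro h
        rw [Sym2.eq_iff] at h
        rcases h with ⟨h, _⟩ | ⟨h, _⟩
        · exact hvn (SimpleGraph.Walk.mem_support_iff_exists_getVert.mpr ⟨i, h.symm, by omega⟩)
        · exact hvn
            (SimpleGraph.Walk.mem_support_iff_exists_getVert.mpr ⟨i + 1, h.symm, by omega⟩)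
      have : (G.deleteEdges {s(w.getVert i, w.getVert (i + 1))}).Adj v m :=
        SimpleGraph.deleteEdges_adj.mpr ⟨hadj, by simpa using hne⟩
      exact (Adj.reachable this).trans h1

lemma support_get_eq_getVert {G : SimpleGraph V} :
    ∀ {v u : V} (p : G.Walk v u) (i : ℕ) (h : i < p.support.length),
      p.support.get ⟨i, h⟩ = p.getVert i := by
  intro v u p
  induction p with
  | nil =>
    intro i h
    simp only [SimpleGraph.Walk.support_nil, List.length_singleton] at h
    interval_cases i
    simp [SimpleGraph.Walk.getVert_zero]
  | @cons v m u hadj w ih =>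
    intro i h
    rcases i with _ | i
    · simp [SimpleGraph.Walk.support_cons, SimpleGraph.Walk.getVert_zero]
    · have h' : i < w.support.length := by
        simpa [SimpleGraph.Walk.support_cons] using h
      have := ih i h'
      simp only [SimpleGraph.Walk.support_cons, List.get_cons_succ,
        SimpleGraph.Walk.getVert_cons_succ]
      exact this

lemma ola_main [Fintype V] {T : SimpleGraph V} (hT : T.IsAcyclic)
    (φ : V ≃ Fin (Fintype.card V)) (hφ : IsOLA T φ)
    {v u a b : V} (hv : (φ v : ℕ) = 0) (hu : (φ u : ℕ) = Fintype.card V - 1)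
    (hab : T.Adj a b)
    (hva : (T.deleteEdges {s(a, b)}).Reachable v a)
    (hbu : (T.deleteEdges {s(a, b)}).Reachable b u)
    (hlt : (φ b : ℕ) < (φ a : ℕ)) : False := by
  classical
  set D := T.deleteEdges {s(a, b)} with hD
  have hbridge : ¬ D.Reachable a b := by
    have hb := (isAcyclic_iff_forall_edge_isBridge.mp hT)
      (show s(a, b) ∈ T.edgeSet from hab)
    exact isBridge_iff.mp hb
  have hDle : D ≤ T := T.deleteEdges_le _
  set S : Finset (Fin (Fintype.card V)) :=
    Finset.univ.filter (fun k => D.Reachable (φ.symm k) a) with hS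
  have memS : ∀ x : V, φ x ∈ S ↔ D.Reachable x a := by
    intro x; simp [hS]
  set σ := sep S with hσ
  set ψ := φ.trans σ with hψdef
  have hψx : ∀ x : V, (ψ x : ℕ) = (σ (φ x) : ℕ) := fun x => rfl
  have hpaS : φ a ∈ S := (memS a).mpr (Reachable.refl a)
  have hpbS : φ b ∉ S := fun h => hbridge ((memS b).mp h).symm
  have hvS : φ v ∈ S := (memS v).mpr hva
  have huS : φ u ∉ S := fun h => hbridge (hbu.trans ((memS u).mp h)).symm
  -- the key per-threshold comparison
  have key : ∀ j : Fin (Fintype.card V),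
      cut T ψ ↑j ≤ cut T φ ↑(σ.symm j) ∧
      (j = σ (φ b) → cut T ψ ↑j + 1 ≤ cut T φ ↑(σ.symm j)) := by
    intro j
    set k : Fin (Fintype.card V) := σ.symm j with hk
    have hkj : σ k = j := σ.apply_symm_apply j
    set F := T.edgeFinset.filter (Crosses ψ ↑j) with hF
    set F' := T.edgeFinset.filter (Crosses φ ↑k) with hF'
    have hcutψ : cut T ψ ↑j = F.card := rfl
    have hcutφ : cut T φ ↑k = F'.card := rfl
    have heab : s(a, b) ∈ T.edgeFinset := mem_edgeFinset.mpr hab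
    by_cases hkS : k ∈ S
    · -- Case 1 : threshold in the A-block
      have hjlt : (j : ℕ) < S.card := hkj ▸ sep_lt_card_of_mem hkS
      have hstrict : j = σ (φ b) → cut T ψ ↑j + 1 ≤ cut T φ ↑(σ.symm j) := by
        intro h
        exfalso
        have hkpb : k = φ b := by rw [hk, h, Equiv.symm_apply_apply]
        exact hpbS (hkpb ▸ hkS)
      have c1 : ∀ f ∈ F, f ≠ s(a, b) → f ∈ F' := by
        intro f hf hne
        rw [hF, mem_filter] at hf
        obtain ⟨hfe, p, q, rfl, h1, h2⟩ := hf
        rw [hψx] at h1 h2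
        have hTpq : T.Adj p q := by rwa [mem_edgeFinset, mem_edgeSet] at hfe
        have hDpq : D.Adj p q := by
          rw [hD, SimpleGraph.deleteEdges_adj]
          exact ⟨hTpq, by simpa using hne⟩
        by_cases hpA : φ p ∈ S
        · have hqA : φ q ∈ S :=
            (memS q).mpr ((hDpq.symm.reachable).trans ((memS p).mp hpA))
          rw [hF', mem_filter]
          refine ⟨hfe, p, q, rfl, ?_, ?_⟩
          · exact (sep_le_sep_iff_of_mem hpA hkS).mp (by rw [hkj]; exact h1)
          · exact (sep_lt_sep_iff_of_mem hkS hqA).mp (by rw [hkj]; exact h2)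
        · exfalso
          have hp' : S.card ≤ (σ (φ p) : ℕ) := card_le_sep_of_not_mem hpA
          omega
      by_cases hae : (σ (φ a) : ℕ) ≤ (j : ℕ)
      · -- edge (a,b) crosses j under ψ ; find a surplus B-edge crossing k
        have heF : s(a, b) ∈ F := by
          rw [hF, mem_filter]
          refine ⟨heab, a, b, rfl, by rw [hψx]; exact hae, ?_⟩
          rw [hψx]
          have hb' : S.card ≤ (σ (φ b) : ℕ) := card_le_sep_of_not_mem hpbS
          omega
        have hpak : (φ a : ℕ) ≤ (k : ℕ) :=
          (sep_le_sep_iff_of_mem hpaS hkS).mp (by rw [hkj]; exact hae)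
        have hkne : k ≠ φ u := fun h => huS (h ▸ hkS)
        have hku : (k : ℕ) < (φ u : ℕ) := by
          have h1 := k.isLt
          have h2 : (k : ℕ) ≠ (φ u : ℕ) := fun h => hkne (Fin.val_injective h)
          omega
        obtain ⟨w⟩ := hbu
        obtain ⟨p, q, hDpq, hrp, hpk, hqk⟩ :=
          exists_cross_edge (G := D) (fun z => (φ z : ℕ)) (k : ℕ) w
            (by show (φ b : ℕ) ≤ (k : ℕ); omega) hku
        have hpB : φ p ∉ S := fun h => hbridge (hrp.trans ((memS p).mp h)).symm
        have hqB : φ q ∉ S := fun h =>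
          hbridge ((hrp.trans hDpq.reachable).trans ((memS q).mp h)).symm
        have hf0F' : s(p, q) ∈ F' := by
          rw [hF', mem_filter]
          exact ⟨mem_edgeFinset.mpr (hDle hDpq), p, q, rfl, hpk, hqk⟩
        have hf0F : s(p, q) ∉ F := by
          rw [hF, mem_filter]
          rintro ⟨-, p', q', heq, h1, h2⟩
          rw [Sym2.eq_iff] at heq
          have hp' : S.card ≤ (σ (φ p) : ℕ) := card_le_sep_of_not_mem hpB
          have hq' : S.card ≤ (σ (φ q) : ℕ) := card_le_sep_of_not_mem hqB
          rcases heq with ⟨rfl, rfl⟩ | ⟨rfl, rfl⟩ <;> rw [hψx] at h1 h2 <;> omega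
        have hsub : F.erase s(a, b) ⊆ F'.erase s(p, q) := by
          intro f hf
          rw [mem_erase] at hf ⊢
          refine ⟨fun h => hf0F (h ▸ hf.2), c1 f hf.2 hf.1⟩
        have hc := card_le_card hsub
        rw [card_erase_of_mem heF, card_erase_of_mem hf0F'] at hc
        have h1 : 1 ≤ F.card := card_pos.mpr ⟨_, heF⟩
        have h2 : 1 ≤ F'.card := card_pos.mpr ⟨_, hf0F'⟩
        refine ⟨by rw [hcutψ, hcutφ]; omega, hstrict⟩
      · -- edge (a,b) does not cross j under ψ
        have heF : s(a, b) ∉ F := by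
          rw [hF, mem_filter]
          rintro ⟨-, p', q', heq, h1, h2⟩
          rw [Sym2.eq_iff] at heq
          have hb' : S.card ≤ (σ (φ b) : ℕ) := card_le_sep_of_not_mem hpbS
          rcases heq with ⟨rfl, rfl⟩ | ⟨rfl, rfl⟩ <;> rw [hψx] at h1 h2 <;> omega
        have hsub : F ⊆ F' := fun f hf => c1 f hf (fun h => heF (h ▸ hf))
        exact ⟨by rw [hcutψ, hcutφ]; exact card_le_card hsub, hstrict⟩
    · -- Case 2 : threshold in the B-block
      have hjge : S.card ≤ (j : ℕ) := hkj ▸ card_le_sep_of_not_mem hkS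
      have c1' : ∀ f ∈ F, f ≠ s(a, b) → f ∈ F' := by
        intro f hf hne
        rw [hF, mem_filter] at hf
        obtain ⟨hfe, p, q, rfl, h1, h2⟩ := hf
        rw [hψx] at h1 h2
        have hTpq : T.Adj p q := by rwa [mem_edgeFinset, mem_edgeSet] at hfe
        have hDpq : D.Adj p q := by
          rw [hD, SimpleGraph.deleteEdges_adj]
          exact ⟨hTpq, by simpa using hne⟩
        by_cases hqA : φ q ∈ S
        · exfalso
          have hq' : (σ (φ q) : ℕ) < S.card := sep_lt_card_of_mem hqA
          omega
        · have hpA : φ p ∉ S := fun h =>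
            (hqA ((memS q).mpr ((hDpq.symm.reachable).trans ((memS p).mp h))))
          rw [hF', mem_filter]
          refine ⟨hfe, p, q, rfl, ?_, ?_⟩
          · exact (sep_le_sep_iff_of_not_mem hpA hkS).mp (by rw [hkj]; exact h1)
          · exact (sep_lt_sep_iff_of_not_mem hkS hqA).mp (by rw [hkj]; exact h2)
      have hcrossE : s(a, b) ∈ F ↔ (j : ℕ) < (σ (φ b) : ℕ) := by
        rw [hF, mem_filter]
        constructor
        · rintro ⟨-, p', q', heq, h1, h2⟩
          rw [Sym2.eq_iff] at heq
          have ha' : (σ (φ a) : ℕ) < S.card := sep_lt_card_of_mem hpaS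
          rcases heq with ⟨rfl, rfl⟩ | ⟨rfl, rfl⟩ <;> rw [hψx] at h1 h2 <;> omega
        · intro h
          have ha' : (σ (φ a) : ℕ) < S.card := sep_lt_card_of_mem hpaS
          exact ⟨heab, a, b, rfl, by rw [hψx]; omega, by rw [hψx]; omega⟩
      -- surplus A-edge crossing k, exists whenever (k:ℕ) < (φ a : ℕ)
      have surplus : (k : ℕ) < (φ a : ℕ) →
          ∃ p q : V, s(p, q) ∈ F' ∧ s(p, q) ∉ F ∧ φ p ∈ S ∧ φ q ∈ S := by
        intro hka
        obtain ⟨w⟩ := id hva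
        obtain ⟨p, q, hDpq, hrp, hpk, hqk⟩ :=
          exists_cross_edge (G := D) (fun z => (φ z : ℕ)) (k : ℕ) w
            (by show (φ v : ℕ) ≤ (k : ℕ); omega)
            (by show (k : ℕ) < (φ a : ℕ); omega)
        have hpA : φ p ∈ S := (memS p).mpr (hrp.symm.trans hva)
        have hqA : φ q ∈ S :=
          (memS q).mpr ((hDpq.symm.reachable).trans ((memS p).mp hpA))
        refine ⟨p, q, ?_, ?_, hpA, hqA⟩
        · rw [hF', mem_filter]
          exact ⟨mem_edgeFinset.mpr (hDle hDpq), p, q, rfl, hpk, hqk⟩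
        · rw [hF, mem_filter]
          rintro ⟨-, p', q', heq, h1, h2⟩
          rw [Sym2.eq_iff] at heq
          have hp' : (σ (φ p) : ℕ) < S.card := sep_lt_card_of_mem hpA
          have hq' : (σ (φ q) : ℕ) < S.card := sep_lt_card_of_mem hqA
          rcases heq with ⟨rfl, rfl⟩ | ⟨rfl, rfl⟩ <;> rw [hψx] at h1 h2 <;> omega
      rcases lt_trichotomy (j : ℕ) ((σ (φ b)) : ℕ) with hj3 | hj3 | hj3
      · -- e crosses j under ψ
        have heF : s(a, b) ∈ F := hcrossE.mpr hj3
        have hkpb : (k : ℕ) < (φ b : ℕ) :=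
          (sep_lt_sep_iff_of_not_mem hkS hpbS).mp (by rw [hkj]; exact hj3)
        obtain ⟨p, q, hf0F', hf0F, hpA, hqA⟩ := surplus (by omega)
        have hsub : F.erase s(a, b) ⊆ F'.erase s(p, q) := by
          intro f hf
          rw [mem_erase] at hf ⊢
          refine ⟨fun h => hf0F (h ▸ hf.2), c1' f hf.2 hf.1⟩
        have hc := card_le_card hsub
        rw [card_erase_of_mem heF, card_erase_of_mem hf0F'] at hc
        have h1 : 1 ≤ F.card := card_pos.mpr ⟨_, heF⟩
        have h2 : 1 ≤ F'.card := card_pos.mpr ⟨_, hf0F'⟩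
        refine ⟨by rw [hcutψ, hcutφ]; omega, ?_⟩
        intro h
        exfalso
        have := congrArg Fin.val h
        omega
      · -- j = σ (φ b) : the strict threshold
        have hkpb : k = φ b := by
          rw [hk, show j = σ (φ b) from Fin.val_injective hj3, Equiv.symm_apply_apply]
        have heF : s(a, b) ∉ F := fun h => by
          have := hcrossE.mp h; omega
        have heF' : s(a, b) ∈ F' := by
          rw [hF', mem_filter]
          refine ⟨heab, b, a, Sym2.eq_swap, ?_, ?_⟩ <;> rw [hkpb] <;> omega
        obtain ⟨p, q, hf0F', hf0F, hpA, hqA⟩ := surplus (by rw [hkpb]; omega)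
        have hne : s(p, q) ≠ s(a, b) := by
          intro h
          rw [Sym2.eq_iff] at h
          rcases h with ⟨rfl, rfl⟩ | ⟨rfl, rfl⟩
          · exact hpbS hqA
          · exact hpbS hpA
        have hsub : insert s(a, b) (insert s(p, q) F) ⊆ F' := by
          intro f hf
          rcases mem_insert.mp hf with rfl | hf
          · exact heF'
          rcases mem_insert.mp hf with rfl | hf
          · exact hf0F'
          · exact c1' f hf (fun h => heF (h ▸ hf))
        have hc := card_le_card hsub
        rw [card_insert_of_notMem (by
            intro h
            rcases mem_insert.mp h with h | h
            · exact hne h.symm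
            · exact heF h),
          card_insert_of_notMem hf0F] at hc
        constructor
        · rw [hcutψ, hcutφ]; omega
        · intro _; rw [hcutψ, hcutφ]; omega
      · -- e does not cross j
        have heF : s(a, b) ∉ F := fun h => by
          have := hcrossE.mp h; omega
        have hsub : F ⊆ F' := fun f hf => c1' f hf (fun h => heF (h ▸ hf))
        refine ⟨by rw [hcutψ, hcutφ]; exact card_le_card hsub, ?_⟩
        intro h
        exfalso
        have := congrArg Fin.val h
        omega
  -- assemble
  have hlt' : layoutCost T ψ < layoutCost T φ := by
    rw [layoutCost_eq_sum_cut, layoutCost_eq_sum_cut]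
    rw [← Fin.sum_univ_eq_sum_range (fun k => cut T ψ k) (Fintype.card V),
      ← Fin.sum_univ_eq_sum_range (fun k => cut T φ k) (Fintype.card V)]
    have hre : ∑ j : Fin (Fintype.card V), cut T φ ↑(σ.symm j)
        = ∑ k : Fin (Fintype.card V), cut T φ ↑k :=
      Equiv.sum_comp σ.symm (fun k : Fin (Fintype.card V) => cut T φ ↑k)
    rw [← hre]
    refine Finset.sum_lt_sum (fun j _ => (key j).1) ⟨σ (φ b), Finset.mem_univ _, ?_⟩
    have := (key (σ (φ b))).2 rfl
    omega
  exact absurd (hφ ψ) (not_le.mpr hlt')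


/-- An optimal linear arrangement of a tree is strictly increasing along
its spinal path (the path from the vertex labeled `1` to the vertex labeled `n`). -/
theorem tree_ola_monotone_on_spine [Fintype V]
    (T : SimpleGraph V) (hT : T.IsTree) (hn : 2 ≤ Fintype.card V)
    (φ : V ≃ Fin (Fintype.card V)) (hφ : IsOLA T φ)
    (v u : V) (hv : (φ v : ℕ) = 0) (hu : (φ u : ℕ) = Fintype.card V - 1)
    (p : T.Walk v u) (hp : p.IsPath) :
    ∀ i j : Fin p.support.length, (i : ℕ) + 1 = (j : ℕ) →
      φ (p.support.get i) < φ (p.support.get j) := by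
  intro i j hij
  have hlen : p.support.length = p.length + 1 := SimpleGraph.Walk.length_support p
  have hi1 : (i : ℕ) + 1 ≤ p.length := by have := j.isLt; omega
  have hgi : p.support.get i = p.getVert ↑i := support_get_eq_getVert p ↑i i.isLt
  have hgj : p.support.get j = p.getVert (↑i + 1) := by
    have h := support_get_eq_getVert p ↑j j.isLt
    rw [hij]
    exact h
  rw [hgi, hgj]
  have hab : T.Adj (p.getVert ↑i) (p.getVert (↑i + 1)) := p.adj_getVert_succ (by omega)
  obtain ⟨h1, h2⟩ := path_split p hp ↑i hi1
  by_contra hcon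
  rw [not_lt] at hcon
  have hne : φ (p.getVert (↑i + 1)) ≠ φ (p.getVert ↑i) :=
    fun h => hab.ne (φ.injective h.symm)
  have hlt : (φ (p.getVert (↑i + 1)) : ℕ) < (φ (p.getVert ↑i) : ℕ) := by
    rw [Fin.le_def] at hcon
    have hne' : (φ (p.getVert (↑i + 1)) : ℕ) ≠ (φ (p.getVert ↑i) : ℕ) :=
      fun h => hne (Fin.val_injective h)
    omega
  exact ola_main hT.IsAcyclic φ hφ hv hu hab h1 h2 hlt
end

section
/- Let G = (V, E) be a finite simple graph on n vertices, let φ be a layout of G, and let C be a cycle subgraph of G such that both the vertex labeled 1 and the vertex labeled n lie on C. Then Σ_{{u,v} ∈ E(C)} |φ(u) − φ(v)| ≥ 2(n − 1). In particular, every layout of the cycle graph on n vertices has linear arrangement cost at least 2(n − 1). -/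
open Finset SimpleGraph
open scoped Classical

variable {V : Type*}

lemma walk_cross {C : SimpleGraph V} (P : V → Prop) :
    ∀ {x y : V}, C.Walk x y → P x → ¬ P y → ∃ u v, C.Adj u v ∧ P u ∧ ¬ P v := by
  intro x y w
  induction w with
  | nil => intro h h'; exact absurd h h'
  | @cons a b c hadj p ih =>
    intro ha hc
    by_cases hb : P b
    · exact ih hb hc
    · exact ⟨a, b, hadj, ha, hb⟩

noncomputable def cnt [Fintype V] (C : SimpleGraph V) (φ : V ≃ Fin (Fintype.card V))
    (k : ℕ) : Finset (V × V) :=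
  univ.filter (fun p => C.Adj p.1 p.2 ∧ (φ p.1 : ℕ) ≤ k ∧ k < (φ p.2 : ℕ))

lemma claim1 [Fintype V] (C : SimpleGraph V) (φ : V ≃ Fin (Fintype.card V)) :
    layoutCost C φ = ∑ k ∈ Finset.range (Fintype.card V - 1), (cnt C φ k).card := by
  classical
  have hn : Fintype.card V = Fintype.card V := rfl
  set D : Finset (V × V) :=
    univ.filter (fun p => C.Adj p.1 p.2 ∧ (φ p.1 : ℕ) < (φ p.2 : ℕ)) with hD
  have step1 : layoutCost C φ = ∑ p ∈ D, ((φ p.2 : ℕ) - (φ p.1 : ℕ)) := by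
    rw [layoutCost]
    refine Eq.symm (Finset.sum_nbij (fun p => Sym2.mk p.1 p.2) ?_ ?_ ?_ ?_)
    · intro p hp
      simp only [hD, mem_filter, mem_univ, true_and] at hp
      simpa [SimpleGraph.mem_edgeFinset] using hp.1
    · intro p hp q hq hpq
      simp only [hD, coe_filter, Set.mem_setOf_eq] at hp hq
      rw [Sym2.mk_eq_mk_iff] at hpq
      rcases hpq with h | h
      · exact h
      · exfalso
        have := hp.2.2
        rw [h] at this
        simp only [Prod.fst_swap, Prod.snd_swap] at this
        omega
    · intro e he
      induction e with
      | _ u v =>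
        rw [Finset.mem_coe, SimpleGraph.mem_edgeFinset, SimpleGraph.mem_edgeSet] at he
        have hne : (φ u : ℕ) ≠ (φ v : ℕ) := by
          intro h
          exact he.ne (φ.injective (Fin.val_injective h))
        rcases lt_or_gt_of_ne hne with h | h
        · exact ⟨(u, v), Finset.mem_coe.2 (by simp [hD, he]; exact h), rfl⟩
        · exact ⟨(v, u), Finset.mem_coe.2 (by simp [hD, he.symm]; exact h), Sym2.eq_swap⟩
    · intro p hp
      simp only [hD, mem_filter, mem_univ, true_and] at hp
      obtain ⟨p1, p2⟩ := p
      simp only [Sym2.lift_mk]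
      simp only [] at hp ⊢
      omega
  rw [step1]
  have step2 : ∀ p ∈ D, (φ p.2 : ℕ) - (φ p.1 : ℕ)
      = ((Finset.range (Fintype.card V - 1)).filter
          (fun k => (φ p.1 : ℕ) ≤ k ∧ k < (φ p.2 : ℕ))).card := by
    intro p hp
    have hb : (φ p.2 : ℕ) < Fintype.card V := (φ p.2).isLt
    have : (Finset.range (Fintype.card V - 1)).filter (fun k => (φ p.1 : ℕ) ≤ k ∧ k < (φ p.2 : ℕ))
        = Finset.Ico (φ p.1 : ℕ) (φ p.2 : ℕ) := by
      ext m; simp only [mem_filter, Finset.mem_range, Finset.mem_Ico]; omega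
    rw [this, Nat.card_Ico]
  rw [Finset.sum_congr rfl step2]
  simp only [Finset.card_filter]
  rw [Finset.sum_comm]
  refine Finset.sum_congr rfl fun k _ => ?_
  rw [cnt, Finset.card_filter, Finset.sum_filter]
  refine Finset.sum_congr rfl fun p _ => ?_
  by_cases h1 : C.Adj p.1 p.2 <;> by_cases h2 : (φ p.1 : ℕ) ≤ k <;>
    by_cases h3 : k < (φ p.2 : ℕ) <;>
    simp [hD, h1, h2, h3] <;> omega

lemma cnt_even [Fintype V] (C : SimpleGraph V)
    (hdeg : ∀ v ∈ C.support, C.degree v = 2)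
    (φ : V ≃ Fin (Fintype.card V)) (k : ℕ) :
    2 ∣ (cnt C φ k).card := by
  classical
  have hdegv : ∀ v : V, C.degree v = 0 ∨ C.degree v = 2 := by
    intro v
    by_cases hv : v ∈ C.support
    · exact Or.inr (hdeg v hv)
    · left
      by_contra h
      have h0 : 0 < C.degree v := Nat.pos_of_ne_zero h
      rw [SimpleGraph.degree_pos_iff_exists_adj] at h0
      exact hv (C.mem_support.2 h0)
  set S : Finset V := univ.filter (fun v => (φ v : ℕ) ≤ k) with hS
  set AB : Finset (V × V) :=
    univ.filter (fun p => C.Adj p.1 p.2 ∧ (φ p.1 : ℕ) ≤ k) with hAB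
  set A : Finset (V × V) :=
    univ.filter (fun p => C.Adj p.1 p.2 ∧ (φ p.1 : ℕ) ≤ k ∧ (φ p.2 : ℕ) ≤ k) with hA
  have hsplit : A.card + (cnt C φ k).card = AB.card := by
    have h := Finset.card_filter_add_card_filter_not
      (s := AB) (p := fun p : V × V => (φ p.2 : ℕ) ≤ k)
    have e1 : AB.filter (fun p : V × V => (φ p.2 : ℕ) ≤ k) = A := by
      rw [hAB, Finset.filter_filter, hA]
      apply Finset.filter_congr
      intro p _
      tauto
    have e2 : AB.filter (fun p : V × V => ¬ (φ p.2 : ℕ) ≤ k) = cnt C φ k := by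
      rw [hAB, Finset.filter_filter, cnt]
      apply Finset.filter_congr
      intro p _
      simp only [not_le]
      tauto
    rw [e1, e2] at h
    exact h
  have hABcard : AB.card = ∑ v ∈ S, C.degree v := by
    rw [hAB, Finset.card_filter, ← Finset.univ_product_univ, Finset.sum_product]
    have : ∀ v : V, (∑ u : V, if C.Adj v u ∧ (φ v : ℕ) ≤ k then 1 else 0)
        = if (φ v : ℕ) ≤ k then C.degree v else 0 := by
      intro v
      by_cases hv : (φ v : ℕ) ≤ k
      · simp only [hv, and_true, if_true]
        rw [SimpleGraph.degree, SimpleGraph.neighborFinset_eq_filter, Finset.card_filter]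
      · simp [hv]
    rw [Finset.sum_congr rfl (fun v _ => this v), ← Finset.sum_filter, hS]
  have hevenAB : 2 ∣ AB.card := by
    rw [hABcard]
    refine Finset.dvd_sum fun v _ => ?_
    rcases hdegv v with h | h <;> simp [h]
  have hevenA : 2 ∣ A.card := by
    have h := Finset.card_filter_add_card_filter_not
      (s := A) (p := fun p : V × V => (φ p.1 : ℕ) < (φ p.2 : ℕ))
    have hcardeq : (A.filter (fun p : V × V => ¬ (φ p.1 : ℕ) < (φ p.2 : ℕ))).card
        = (A.filter (fun p : V × V => (φ p.1 : ℕ) < (φ p.2 : ℕ))).card := by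
      have hne : ∀ p ∈ A, (φ p.1 : ℕ) ≠ (φ p.2 : ℕ) := by
        intro p hp h
        rw [hA] at hp
        simp only [mem_filter, mem_univ, true_and] at hp
        exact hp.1.ne (φ.injective (Fin.val_injective h))
      refine Finset.card_bij (fun p _ => p.swap) ?_ ?_ ?_
      · intro p hp
        simp only [hA, Finset.mem_filter, Finset.mem_univ, true_and, not_lt,
          Prod.fst_swap, Prod.snd_swap] at hp ⊢
        obtain ⟨⟨hadj, h1, h2⟩, hle⟩ := hp
        have hne' : (φ p.1 : ℕ) ≠ (φ p.2 : ℕ) :=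
          fun h => hadj.ne (φ.injective (Fin.val_injective h))
        exact ⟨⟨hadj.symm, h2, h1⟩, by omega⟩
      · intro p hp q hq hpq
        exact Prod.swap_injective hpq
      · intro p hp
        refine ⟨p.swap, ?_, Prod.swap_swap p⟩
        simp only [hA, Finset.mem_filter, Finset.mem_univ, true_and, not_lt,
          Prod.fst_swap, Prod.snd_swap] at hp ⊢
        obtain ⟨⟨hadj, h1, h2⟩, hlt⟩ := hp
        have hne' : (φ p.1 : ℕ) ≠ (φ p.2 : ℕ) :=
          fun h => hadj.ne (φ.injective (Fin.val_injective h))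
        exact ⟨⟨hadj.symm, h2, h1⟩, by omega⟩
    omega
  omega

lemma key_bound [Fintype V] (C : SimpleGraph V)
    (hdeg : ∀ v ∈ C.support, C.degree v = 2)
    (hconn : ∀ x y : V, x ∈ C.support → y ∈ C.support → C.Reachable x y)
    (φ : V ≃ Fin (Fintype.card V)) (x y : V)
    (hx : (φ x : ℕ) = 0) (hy : (φ y : ℕ) = Fintype.card V - 1)
    (hxC : x ∈ C.support) (hyC : y ∈ C.support) :
    2 * (Fintype.card V - 1) ≤ layoutCost C φ := by
  classical
  have claim2 : ∀ k ∈ Finset.range (Fintype.card V - 1), 2 ≤ (cnt C φ k).card := by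
    intro k hk
    rw [Finset.mem_range] at hk
    obtain ⟨w⟩ := hconn x y hxC hyC
    obtain ⟨u, v, hadj, hu, hv⟩ := walk_cross (fun v => (φ v : ℕ) ≤ k) w
      (by show (φ x : ℕ) ≤ k; omega) (by show ¬ ((φ y : ℕ) ≤ k); omega)
    have hne : (cnt C φ k).Nonempty :=
      ⟨(u, v), by simp only [cnt, Finset.mem_filter, Finset.mem_univ, true_and]
                  exact ⟨hadj, hu, by omega⟩⟩
    have h1 : 1 ≤ (cnt C φ k).card := Finset.card_pos.2 hne
    have h2 := cnt_even C hdeg φ k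
    omega
  calc 2 * (Fintype.card V - 1)
      = ∑ _k ∈ Finset.range (Fintype.card V - 1), 2 := by
        rw [Finset.sum_const, Finset.card_range, smul_eq_mul, Nat.mul_comm]
    _ ≤ ∑ k ∈ Finset.range (Fintype.card V - 1), (cnt C φ k).card :=
        Finset.sum_le_sum claim2
    _ = layoutCost C φ := (claim1 C φ).symm

lemma cyc_deg {m : ℕ} (hm : 3 ≤ m) (v : Fin m) : (cycleGraph m).degree v = 2 := by
  match m, hm, v with
  | (n+3), _, v => exact cycleGraph_degree_three_le

set_option maxHeartbeats 1000000 in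
/-- If `C` is a cycle subgraph of `G` (a subgraph which is connected on its
support and in which every support vertex has degree exactly `2`) containing both the
vertex labeled `1` and the vertex labeled `n` of a layout `φ`, then the total expansion of
the edges of `C` is at least `2(n-1)`.  In particular every layout of the cycle graph on
`m ≥ 3` vertices has linear arrangement cost at least `2(m-1)`. -/
theorem cycle_through_extremes_cost_lower_bound [Fintype V]
    (G C : SimpleGraph V) (hle : C ≤ G)
    (hdeg : ∀ v ∈ C.support, C.degree v = 2)
    (hconn : ∀ x y : V, x ∈ C.support → y ∈ C.support → C.Reachable x y)
    (φ : V ≃ Fin (Fintype.card V))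
    (x y : V) (hx : (φ x : ℕ) = 0) (hy : (φ y : ℕ) = Fintype.card V - 1)
    (hxC : x ∈ C.support) (hyC : y ∈ C.support) :
    2 * (Fintype.card V - 1) ≤ layoutCost C φ ∧
    ∀ (m : ℕ), 3 ≤ m → ∀ ψ : Fin m ≃ Fin (Fintype.card (Fin m)),
      2 * (m - 1) ≤ layoutCost (SimpleGraph.cycleGraph m) ψ := by
  constructor
  · exact key_bound C hdeg hconn φ x y hx hy hxC hyC
  · intro m hm ψ
    have hcard : Fintype.card (Fin m) = m := Fintype.card_fin m
    have hpos : 0 < Fintype.card (Fin m) := by omega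
    set x' : Fin m := ψ.symm ⟨0, hpos⟩ with hx'
    set y' : Fin m := ψ.symm ⟨Fintype.card (Fin m) - 1, by omega⟩ with hy'
    have hsupp : ∀ v : Fin m, v ∈ (cycleGraph m).support := by
      intro v
      have h2 : (cycleGraph m).degree v = 2 := cyc_deg hm v
      have : 0 < (cycleGraph m).degree v := by omega
      rw [SimpleGraph.degree_pos_iff_exists_adj] at this
      exact (cycleGraph m).mem_support.2 this
    have hdeg' : ∀ v ∈ (cycleGraph m).support,
        @SimpleGraph.degree (Fin m) (cycleGraph m) v
          (@SimpleGraph.neighborSetFintype (Fin m) (cycleGraph m) (Fin.fintype m)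
            (fun a b => Classical.propDecidable ((cycleGraph m).Adj a b)) v) = 2 := by
      intro v _
      convert cyc_deg hm v
    have hb := key_bound (cycleGraph m) hdeg'
      (fun a b _ _ => cycleGraph_preconnected a b) ψ x' y'
      (by rw [hx', Equiv.apply_symm_apply]) (by rw [hy', Equiv.apply_symm_apply])
      (hsupp x') (hsupp y')
    rw [hcard] at hb
    exact hb
end
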